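/- Let α > -1, γ > α + 1/2, ω a function of modulus of continuity type, and 0 < η < −(2(α−γ)+1)/4. Then for every integer n ≥ 1, n^{(2α−2γ+1)/4} · ( ω(n^η) · n^{η(2(α−γ)+1)/4} + ∫_1^{n^η} ω(y) · y^{(2(α−γ)+1)/4 − 1} dy ) ≤ C · n^{η + (2(α−γ)+1)/4} · ω(1), where C depends only on α, γ, η. -/

import Mathlib

open MeasureTheory

def ModulusType (ω : ℝ → ℝ) : Prop :=
  ContinuousOn ω (Set.Ici 0) ∧ MonotoneOn ω (Set.Ici 0) ∧ ω 0 = 0 ∧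
    (∀ a b : ℝ, 0 ≤ a → 0 ≤ b → ω (a + b) ≤ ω a + ω b) ∧
    (∀ t : ℝ, 0 ≤ t → 0 ≤ ω t)

theorem J3_estimate (α γ η : ℝ) (hα : -1 < α) (hγ : α + 1 / 2 < γ)
    (hη0 : 0 < η) (hη1 : η < -(2 * (α - γ) + 1) / 4)
    (ω : ℝ → ℝ) (hω : ModulusType ω) :
    ∃ C : ℝ, 0 < C ∧ ∀ n : ℕ, 1 ≤ n →
      (n : ℝ) ^ ((2 * α - 2 * γ + 1) / 4) *
          (ω ((n : ℝ) ^ η) * (n : ℝ) ^ (η * (2 * (α - γ) + 1) / 4) +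
            ∫ y in Set.Ioc (1 : ℝ) ((n : ℝ) ^ η), ω y * y ^ ((2 * (α - γ) + 1) / 4 - 1)) ≤
        C * (n : ℝ) ^ (η + (2 * (α - γ) + 1) / 4) * ω 1 := by
  obtain ⟨hc, hmono, h0, hsub, hnn⟩ := hω
  have hω1 : 0 ≤ ω 1 := hnn 1 one_pos.le
  have hnat : ∀ m : ℕ, ω m ≤ m * ω 1 := by
    intro m
    induction m with
    | zero => simp [h0]
    | succ k ih =>
      have h := hsub k 1 (by positivity) one_pos.le
      push_cast
      calc ω ((k : ℝ) + 1) ≤ ω k + ω 1 := h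
        _ ≤ k * ω 1 + ω 1 := by linarith
        _ = ((k : ℝ) + 1) * ω 1 := by ring
  have hlin : ∀ y : ℝ, 1 ≤ y → ω y ≤ 2 * y * ω 1 := by
    intro y hy
    have hy0 : (0:ℝ) ≤ y := by linarith
    have h1 : ω y ≤ ω (⌈y⌉₊ : ℝ) :=
      hmono hy0 (Set.mem_Ici.mpr (Nat.cast_nonneg _)) (Nat.le_ceil y)
    have h2 : (⌈y⌉₊ : ℝ) ≤ y + 1 := (Nat.ceil_lt_add_one hy0).le
    have h3 := hnat ⌈y⌉₊
    nlinarith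
  refine ⟨4, by norm_num, ?_⟩
  intro n hn
  have hn1 : (1:ℝ) ≤ (n:ℝ) := by exact_mod_cast hn
  have hn0 : (0:ℝ) < (n:ℝ) := by linarith
  have he : (2 * α - 2 * γ + 1) / 4 = (2 * (α - γ) + 1) / 4 := by ring
  rw [he]
  set b : ℝ := (2 * (α - γ) + 1) / 4 with hb
  have hbneg : b < 0 := by rw [hb]; linarith
  set X : ℝ := (n:ℝ) ^ η with hX
  have hX1 : (1:ℝ) ≤ X := Real.one_le_rpow hn1 hη0.le
  have hXpos : 0 < X := by linarith
  -- term 1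
  have hpow1 : (n:ℝ) ^ (η * (2 * (α - γ) + 1) / 4) ≤ 1 := by
    apply Real.rpow_le_one_of_one_le_of_nonpos hn1
    have : η * (2 * (α - γ) + 1) / 4 = η * b := by rw [hb]; ring
    rw [this]
    nlinarith
  have hpownn : (0:ℝ) ≤ (n:ℝ) ^ (η * (2 * (α - γ) + 1) / 4) :=
    (Real.rpow_pos_of_pos hn0 _).le
  have hT1 : ω X * (n:ℝ) ^ (η * (2 * (α - γ) + 1) / 4) ≤ 2 * X * ω 1 := by
    calc ω X * (n:ℝ) ^ (η * (2 * (α - γ) + 1) / 4)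
        ≤ (2 * X * ω 1) * 1 :=
          mul_le_mul (hlin X hX1) hpow1 hpownn (by positivity)
      _ = 2 * X * ω 1 := by ring
  -- term 2
  have hint : (∫ y in Set.Ioc (1:ℝ) X, ω y * y ^ (b - 1)) ≤
      ∫ _y in Set.Ioc (1:ℝ) X, (2 * ω 1 : ℝ) := by
    apply integral_mono_of_nonneg
    · filter_upwards [ae_restrict_mem measurableSet_Ioc] with y hy
      have hy0 : 0 < y := lt_trans one_pos hy.1
      have := hnn y hy0.le
      have := Real.rpow_pos_of_pos hy0 (b - 1)
      positivity
    · exact integrableOn_const measure_Ioc_lt_top.ne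
    · filter_upwards [ae_restrict_mem measurableSet_Ioc] with y hy
      have hy1 : 1 ≤ y := hy.1.le
      have hy0 : 0 < y := by linarith
      have h1 : ω y * y ^ (b - 1) ≤ (2 * y * ω 1) * y ^ (b - 1) :=
        mul_le_mul_of_nonneg_right (hlin y hy1) (Real.rpow_pos_of_pos hy0 _).le
      have h2 : y * y ^ (b - 1) = y ^ b := by
        have h := Real.rpow_add hy0 1 (b - 1)
        rw [Real.rpow_one, show 1 + (b - 1) = b by ring] at h
        exact h.symm
      have h3 : y ^ b ≤ 1 := Real.rpow_le_one_of_one_le_of_nonpos hy1 hbneg.le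
      calc ω y * y ^ (b - 1) ≤ (2 * y * ω 1) * y ^ (b - 1) := h1
        _ = 2 * ω 1 * (y * y ^ (b - 1)) := by ring
        _ = 2 * ω 1 * y ^ b := by rw [h2]
        _ ≤ 2 * ω 1 * 1 := by nlinarith
        _ = 2 * ω 1 := by ring
  have hconst : (∫ _y in Set.Ioc (1:ℝ) X, (2 * ω 1 : ℝ)) = (X - 1) * (2 * ω 1) := by
    rw [setIntegral_const, Real.volume_real_Ioc_of_le hX1, smul_eq_mul]
  have hT2 : (∫ y in Set.Ioc (1:ℝ) X, ω y * y ^ (b - 1)) ≤ 2 * X * ω 1 := by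
    calc (∫ y in Set.Ioc (1:ℝ) X, ω y * y ^ (b - 1)) ≤ (X - 1) * (2 * ω 1) := by
          rw [← hconst]; exact hint
      _ ≤ 2 * X * ω 1 := by nlinarith
  have hsum : ω X * (n:ℝ) ^ (η * (2 * (α - γ) + 1) / 4) +
      (∫ y in Set.Ioc (1:ℝ) X, ω y * y ^ (b - 1)) ≤ 4 * X * ω 1 := by linarith
  have hbpos : 0 < (n:ℝ) ^ b := Real.rpow_pos_of_pos hn0 b
  have hsplit : (n:ℝ) ^ (η + b) = X * (n:ℝ) ^ b := by
    rw [hX, ← Real.rpow_add hn0]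
  calc (n:ℝ) ^ b * (ω X * (n:ℝ) ^ (η * (2 * (α - γ) + 1) / 4) +
        ∫ y in Set.Ioc (1:ℝ) X, ω y * y ^ (b - 1))
      ≤ (n:ℝ) ^ b * (4 * X * ω 1) := mul_le_mul_of_nonneg_left hsum hbpos.le
    _ = 4 * (X * (n:ℝ) ^ b) * ω 1 := by ring
    _ = 4 * (n:ℝ) ^ (η + b) * ω 1 := by rw [hsplit]
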